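/- Let p > 3 be a prime and F a field of characteristic p. Let a₄, a₆, x, y ∈ F with x ≠ 0, y ≠ 0 and y² = x³ + a₄·x + a₆. Let A, M, L be the Hasse invariant decomposition data of (X³ + a₄X + a₆)^((p−1)/2), evaluated at a₄, a₆ (and at x for M, L), and set ℘_A(z) = z^p − A·z. Then y·M(x) − ℘_A((3x² + 2a₄)/(3y)) = ℘_A((a₄·x + 3a₆)/(3xy)) − y·L(x)/x^p. -/

import Mathlib

/-- Let `p > 3` be a prime and `F` a field of characteristic `p`.
Let `a₄, a₆, x, y ∈ F` with `x ≠ 0`, `y ≠ 0` and `y² = x³ + a₄·x + a₆`.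
Let `A`, `M`, `L` be the Hasse invariant decomposition data of
`(X³ + a₄X + a₆)^((p−1)/2)` (so `A` is the coefficient of `X^(p−1)`, `M` is the quotient and
`A·X^(p−1) + L` the remainder upon division by `X^p`), evaluated at `a₄, a₆` (and at `x` for
`M`, `L`), and set `℘_A(z) = z^p − A·z`.  Then
`y·M(x) − ℘_A((3x² + 2a₄)/(3y)) = ℘_A((a₄·x + 3a₆)/(3xy)) − y·L(x)/x^p`. -/
theorem stmt_3 (p : ℕ) (hp : p.Prime) (hp3 : 3 < p)
    (F : Type*) [Field F] [CharP F p]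
    (a₄ a₆ x y : F) (hx : x ≠ 0) (hy : y ≠ 0)
    (hcurve : y ^ 2 = x ^ 3 + a₄ * x + a₆) :
    let P : Polynomial F :=
      (Polynomial.X ^ 3 + Polynomial.C a₄ * Polynomial.X + Polynomial.C a₆) ^ ((p - 1) / 2)
    let A : F := P.coeff (p - 1)
    let M : Polynomial F := Polynomial.divByMonic P (Polynomial.X ^ p)
    let L : Polynomial F :=
      Polynomial.modByMonic P (Polynomial.X ^ p) - Polynomial.C A * Polynomial.X ^ (p - 1)
    let wA : F → F := fun z => z ^ p - A * z
    y * M.eval x - wA ((3 * x ^ 2 + 2 * a₄) / (3 * y))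
      = wA ((a₄ * x + 3 * a₆) / (3 * x * y)) - y * L.eval x / x ^ p := by
  intro P A M L wA
  haveI : Fact p.Prime := ⟨hp⟩
  -- 3 ≠ 0 in F
  have h3 : (3 : F) ≠ 0 := by
    have : ¬ (p ∣ 3) := fun h => absurd (Nat.le_of_dvd (by norm_num) h) (by omega)
    simpa [CharP.cast_eq_zero_iff F p 3] using
      (fun h : (3 : F) = 0 => this ((CharP.cast_eq_zero_iff F p 3).mp (by exact_mod_cast h)))
  have hxp : x ^ p ≠ 0 := pow_ne_zero _ hx
  -- p - 1 is even
  obtain ⟨k, hk⟩ : Odd p := hp.odd_of_ne_two (by omega)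
  -- y^(p-1) = P.eval x
  have hyp1 : y ^ (p - 1) = P.eval x := by
    have : y ^ (p - 1) = (y ^ 2) ^ ((p - 1) / 2) := by
      rw [← pow_mul]; congr 1; omega
    rw [this, hcurve]
    simp [P]
  -- decomposition evaluated at x
  have hdecomp : P.eval x = x ^ p * M.eval x + A * x ^ (p - 1) + L.eval x := by
    have h := Polynomial.modByMonic_add_div P (Polynomial.X ^ p : Polynomial F)
    have := congrArg (Polynomial.eval x) h
    simp only [Polynomial.eval_add, Polynomial.eval_mul, Polynomial.eval_pow,
      Polynomial.eval_X] at this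
    simp only [L, M, Polynomial.eval_sub, Polynomial.eval_mul, Polynomial.eval_pow,
      Polynomial.eval_C, Polynomial.eval_X]
    linear_combination -this
  have hmain : y ^ (p - 1) = x ^ p * M.eval x + A * x ^ (p - 1) + L.eval x := by
    rw [hyp1, hdecomp]
  -- sum of arguments is y/x
  have hsum : (3 * x ^ 2 + 2 * a₄) / (3 * y) + (a₄ * x + 3 * a₆) / (3 * x * y) = y / x := by
    field_simp
    linear_combination (-3) * hcurve
  have key : wA ((3 * x ^ 2 + 2 * a₄) / (3 * y)) + wA ((a₄ * x + 3 * a₆) / (3 * x * y))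
      = (y / x) ^ p - A * (y / x) := by
    simp only [wA]
    rw [← hsum, add_pow_char]
    ring
  have hyx : (y / x) ^ p = y ^ p / x ^ p := div_pow y x p
  have hyp : y ^ p = y * y ^ (p - 1) := by
    rw [← pow_succ']
    congr 1; omega
  have hxpe : x ^ p = x * x ^ (p - 1) := by
    rw [← pow_succ']
    congr 1; omega
  rw [hxpe] at hmain
  have hfin : y * M.eval x + y * L.eval x / x ^ p = (y / x) ^ p - A * (y / x) := by
    rw [hyx, hyp, hxpe]
    have hxq : x ^ (p - 1) ≠ 0 := pow_ne_zero _ hx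
    field_simp
    linear_combination -hmain
  linear_combination hfin - key
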